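/- Let P be a product probability density on bitstrings of length n, let m ≥ 1, and let S be a nonempty finite set of bitstrings such that any two distinct elements of S have Hamming distance at least m. Then ∑_{z ∈ S} P(z) − max_{z ∈ S} P(z) ≤ ( ∑_{ℓ=0}^{⌊(m−1)/2⌋} C(m,ℓ) )^{−1}. In other words, the total probability of all elements of S except the most likely one is at most 1 / ∑_{ℓ=0}^{⌊(m−1)/2⌋} C(m,ℓ). -/
import Mathlib

open Finset

section Aux

variable {n : ℕ}

private lemma Pnn (q : Fin n → ℝ) (hq : ∀ i, 0 ≤ q i ∧ q i ≤ 1)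
    (x : Fin n → Bool) : 0 ≤ ∏ i, if x i then q i else 1 - q i :=
  Finset.prod_nonneg fun i _ => by
    rcases hq i with ⟨h0, h1⟩; split <;> linarith

private lemma Ptotal (q : Fin n → ℝ) :
    ∑ x : Fin n → Bool, (∏ i, if x i then q i else 1 - q i) = 1 := by
  classical
  have h := Finset.prod_univ_sum (fun _ : Fin n => (Finset.univ : Finset Bool))
      (fun i b => if b then q i else 1 - q i)
  simp only [Fintype.piFinset_univ] at h
  rw [← h]
  have h1 : ∀ i : Fin n, (∑ b : Bool, if b then q i else 1 - q i) = 1 := by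
    intro i
    rw [Fintype.sum_bool]
    simp
  simp [h1]

private def flipOn (z z' : Fin n → Bool) (A : Finset (Fin n)) : Fin n → Bool :=
  fun i => if i ∈ A then z' i else z i

private lemma flip_mul (q : Fin n → ℝ) (z z' : Fin n → Bool) (A : Finset (Fin n)) :
    (∏ i, if flipOn z z' A i then q i else 1 - q i) *
      (∏ i, if flipOn z' z A i then q i else 1 - q i)
    = (∏ i, if z i then q i else 1 - q i) * (∏ i, if z' i then q i else 1 - q i) := by
  classical
  rw [← Finset.prod_mul_distrib, ← Finset.prod_mul_distrib]
  refine Finset.prod_congr rfl fun i _ => ?_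
  by_cases h : i ∈ A <;> simp [flipOn, h, mul_comm]

private lemma flip_dist (z z' : Fin n → Bool) (A : Finset (Fin n)) :
    hammingDist (flipOn z z' A) z ≤ A.card := by
  classical
  have hsub : ({i | flipOn z z' A i ≠ z i} : Finset (Fin n)) ⊆ A := by
    intro i hi
    simp only [Finset.mem_filter] at hi
    by_contra hiA
    exact hi.2 (by simp [flipOn, hiA])
  simpa [hammingDist] using Finset.card_le_card hsub

private lemma flip_inj (z z' : Fin n → Bool) (D0 : Finset (Fin n))
    (hD0 : ∀ i ∈ D0, z i ≠ z' i) (A B : Finset (Fin n))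
    (hA : A ⊆ D0) (hB : B ⊆ D0) (h : flipOn z z' A = flipOn z z' B) : A = B := by
  classical
  ext i
  constructor
  · intro hiA
    have h1 : flipOn z z' A i = z' i := by simp [flipOn, hiA]
    by_contra hiB
    have h2 : flipOn z z' B i = z i := by simp [flipOn, hiB]
    exact hD0 i (hA hiA) (by rw [← h1, h, h2])
  · intro hiB
    have h1 : flipOn z z' B i = z' i := by simp [flipOn, hiB]
    by_contra hiA
    have h2 : flipOn z z' A i = z i := by simp [flipOn, hiA]
    exact hD0 i (hB hiB) (by rw [← h2, h, h1])

private lemma ball_lower (q : Fin n → ℝ) (hq : ∀ i, 0 ≤ q i ∧ q i ≤ 1)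
    (r : ℕ) (z z' : Fin n → Bool)
    (D0 : Finset (Fin n)) (hD0 : ∀ i ∈ D0, z i ≠ z' i) :
    ∑ A ∈ D0.powerset.filter (fun A => A.card ≤ r),
        (∏ i, if flipOn z z' A i then q i else 1 - q i)
      ≤ ∑ x ∈ univ.filter (fun x => hammingDist x z ≤ r),
          (∏ i, if x i then q i else 1 - q i) := by
  classical
  set F := D0.powerset.filter (fun A => A.card ≤ r) with hF
  have hinj : ∀ A ∈ F, ∀ B ∈ F, flipOn z z' A = flipOn z z' B → A = B := by
    intro A hA B hB h
    simp only [hF, Finset.mem_filter, Finset.mem_powerset] at hA hB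
    exact flip_inj z z' D0 hD0 A B hA.1 hB.1 h
  have himg : ∑ x ∈ F.image (flipOn z z'), (∏ i, if x i then q i else 1 - q i)
      = ∑ A ∈ F, (∏ i, if flipOn z z' A i then q i else 1 - q i) :=
    Finset.sum_image hinj
  rw [← himg]
  apply Finset.sum_le_sum_of_subset_of_nonneg
  · intro x hx
    simp only [Finset.mem_image] at hx
    obtain ⟨A, hA, rfl⟩ := hx
    simp only [hF, Finset.mem_filter, Finset.mem_powerset] at hA
    simp only [Finset.mem_filter, Finset.mem_univ, true_and]
    exact le_trans (flip_dist z z' A) hA.2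
  · intro x _ _
    exact Pnn q hq x

private lemma card_F (r m : ℕ) (D0 : Finset (Fin n)) (hcard : D0.card = m) :
    (D0.powerset.filter fun A => A.card ≤ r).card = ∑ ℓ ∈ range (r+1), m.choose ℓ := by
  classical
  have heq : (D0.powerset.filter fun A => A.card ≤ r)
      = (range (r+1)).biUnion (fun ℓ => D0.powersetCard ℓ) := by
    ext A
    simp only [Finset.mem_filter, Finset.mem_powerset, Finset.mem_biUnion,
      Finset.mem_range, Finset.mem_powersetCard, Nat.lt_succ_iff]
    constructor
    · rintro ⟨h1, h2⟩; exact ⟨A.card, h2, h1, rfl⟩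
    · rintro ⟨ℓ, hℓ, h1, rfl⟩; exact ⟨h1, hℓ⟩
  rw [heq, Finset.card_biUnion]
  · exact Finset.sum_congr rfl fun ℓ _ => by rw [Finset.card_powersetCard, hcard]
  · intro ℓ _ ℓ' _ hne
    simp only [Finset.disjoint_left, Finset.mem_powersetCard]
    rintro A ⟨_, rfl⟩ ⟨_, h⟩
    exact hne h

private lemma amgm (x y c : ℝ) (hx : 0 ≤ x) (hy : 0 ≤ y) (hc : 0 ≤ c)
    (h : x * y = c ^ 2) : 2 * c ≤ x + y := by
  have h1 : 2 * Real.sqrt x * Real.sqrt y ≤ Real.sqrt x ^ 2 + Real.sqrt y ^ 2 :=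
    two_mul_le_add_sq _ _
  rw [Real.sq_sqrt hx, Real.sq_sqrt hy] at h1
  have h2 : Real.sqrt x * Real.sqrt y = c := by
    rw [← Real.sqrt_mul hx, h, Real.sqrt_sq hc]
  nlinarith [h1, h2]

private lemma key (m r : ℕ) (q : Fin n → ℝ) (hq : ∀ i, 0 ≤ q i ∧ q i ≤ 1)
    (P : (Fin n → Bool) → ℝ)
    (hP : ∀ x, P x = ∏ i, if x i then q i else 1 - q i)
    (z z' : Fin n → Bool) (hd : m ≤ hammingDist z z')
    (hz : 0 < P z) (hz' : 0 < P z') :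
    ((∑ ℓ ∈ range (r+1), m.choose ℓ : ℕ) : ℝ) * P z
        ≤ ∑ x ∈ univ.filter (fun x => hammingDist x z ≤ r), P x
    ∨ ((∑ ℓ ∈ range (r+1), m.choose ℓ : ℕ) : ℝ) * P z'
        ≤ ∑ x ∈ univ.filter (fun x => hammingDist x z' ≤ r), P x := by
  classical
  -- choose m coordinates of disagreement
  have hdle : m ≤ ({i | z i ≠ z' i} : Finset (Fin n)).card := hd
  obtain ⟨D0, hD0sub, hD0card⟩ := Finset.exists_subset_card_eq hdle
  have hD0 : ∀ i ∈ D0, z i ≠ z' i := by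
    intro i hi
    have := hD0sub hi
    simpa using this
  have hD0' : ∀ i ∈ D0, z' i ≠ z i := fun i hi => (hD0 i hi).symm
  set F := D0.powerset.filter (fun A => A.card ≤ r) with hFdef
  set K : ℕ := ∑ ℓ ∈ range (r+1), m.choose ℓ with hK
  have hcardF : F.card = K := card_F r m D0 hD0card
  -- AM-GM sum
  have hsum : 2 * (K : ℝ) * (P z * P z')
      ≤ (∑ A ∈ F, P (flipOn z z' A)) * P z' + (∑ A ∈ F, P (flipOn z' z A)) * P z := by
    rw [Finset.sum_mul, Finset.sum_mul, ← Finset.sum_add_distrib]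
    have : 2 * (K : ℝ) * (P z * P z') = ∑ _A ∈ F, 2 * (P z * P z') := by
      rw [Finset.sum_const, hcardF, nsmul_eq_mul]; ring
    rw [this]
    apply Finset.sum_le_sum
    intro A _
    have hxy : (P (flipOn z z' A) * P z') * (P (flipOn z' z A) * P z)
        = (P z * P z') ^ 2 := by
      simp only [hP]
      linear_combination ((∏ i, if z i then q i else 1 - q i) *
        (∏ i, if z' i then q i else 1 - q i)) * flip_mul q z z' A
    have h1 : 0 ≤ P (flipOn z z' A) := by rw [hP]; exact Pnn q hq _
    have h2 : 0 ≤ P (flipOn z' z A) := by rw [hP]; exact Pnn q hq _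
    have := amgm (P (flipOn z z' A) * P z') (P (flipOn z' z A) * P z)
      (P z * P z') (mul_nonneg h1 hz'.le) (mul_nonneg h2 hz.le)
      (mul_nonneg hz.le hz'.le) hxy
    linarith
  by_contra hcon
  push_neg at hcon
  obtain ⟨hc1, hc2⟩ := hcon
  have hb1 : ∑ A ∈ F, P (flipOn z z' A)
      ≤ ∑ x ∈ univ.filter (fun x => hammingDist x z ≤ r), P x := by
    have := ball_lower q hq r z z' D0 hD0
    simpa only [← hP] using this
  have hb2 : ∑ A ∈ F, P (flipOn z' z A)
      ≤ ∑ x ∈ univ.filter (fun x => hammingDist x z' ≤ r), P x := by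
    have := ball_lower q hq r z' z D0 hD0'
    simpa only [← hP] using this
  have hlt1 : ∑ A ∈ F, P (flipOn z z' A) < (K : ℝ) * P z := lt_of_le_of_lt hb1 hc1
  have hlt2 : ∑ A ∈ F, P (flipOn z' z A) < (K : ℝ) * P z' := lt_of_le_of_lt hb2 hc2
  nlinarith [hsum, hlt1, hlt2, hz, hz']

end Aux

/-- Paper: Result 2, first inequality of Eq. (14).
Let `P` be a product probability density on bitstrings of length `n`, let
`m ≥ 1`, and let `S` be a nonempty finite set of bitstrings any two distinct
elements of which have Hamming distance at least `m`. Then the total probability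
of all elements of `S` except the most likely one is at most
`1 / ∑_{ℓ=0}^{⌊(m-1)/2⌋} C(m,ℓ)`. -/
theorem sum_sub_max_le_inv_binomial_sum
    (n m : ℕ) (hm : 1 ≤ m) (q : Fin n → ℝ) (hq : ∀ i, 0 ≤ q i ∧ q i ≤ 1)
    (P : (Fin n → Bool) → ℝ)
    (hP : ∀ x, P x = ∏ i, if x i then q i else 1 - q i)
    (S : Finset (Fin n → Bool)) (hS : S.Nonempty)
    (hdist : ∀ z ∈ S, ∀ z' ∈ S, z ≠ z' → m ≤ hammingDist z z') :
    (∑ z ∈ S, P z) - S.sup' hS P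
      ≤ (∑ ℓ ∈ Finset.range ((m - 1) / 2 + 1), (m.choose ℓ : ℝ))⁻¹ := by
  classical
  set r : ℕ := (m - 1) / 2 with hr
  set K : ℕ := ∑ ℓ ∈ Finset.range (r+1), m.choose ℓ with hKdef
  have hKcast : (∑ ℓ ∈ Finset.range ((m - 1) / 2 + 1), (m.choose ℓ : ℝ)) = (K : ℝ) := by
    rw [hKdef]; push_cast; rfl
  rw [hKcast]
  have hKpos : 0 < K := by
    have h0 : 1 ≤ K := by
      have := Finset.single_le_sum (f := fun ℓ => m.choose ℓ)
        (fun ℓ _ => Nat.zero_le _) (Finset.mem_range.2 (Nat.succ_pos r))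
      simpa using this
    omega
  have hKposR : (0 : ℝ) < (K : ℝ) := by exact_mod_cast hKpos
  have hPnn : ∀ x, 0 ≤ P x := fun x => by rw [hP]; exact Pnn q hq x
  set ball : (Fin n → Bool) → Finset (Fin n → Bool) :=
    fun z => Finset.univ.filter (fun x => hammingDist x z ≤ r) with hball
  set T : Finset (Fin n → Bool) := S.filter (fun z => (K : ℝ) * P z ≤ ∑ x ∈ ball z, P x)
    with hT
  -- balls around distinct elements of S are disjoint
  have hdisj : ∀ z ∈ S, ∀ z' ∈ S, z ≠ z' → Disjoint (ball z) (ball z') := by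
    intro z hz z' hz' hne
    rw [Finset.disjoint_left]
    intro x hx hx'
    simp only [hball, Finset.mem_filter] at hx hx'
    have htri : hammingDist z z' ≤ hammingDist x z + hammingDist x z' := by
      have := hammingDist_triangle z x z'
      rw [hammingDist_comm z x] at this
      exact this
    have hm' : m ≤ 2 * r + 1 - 1 := by
      have := hdist z hz z' hz' hne
      omega
    have : m ≤ hammingDist z z' := hdist z hz z' hz' hne
    have h2r : 2 * r ≤ m - 1 := by omega
    omega
  -- sum over T bounded
  have hTsum : ∑ z ∈ T, P z ≤ (K : ℝ)⁻¹ := by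
    rw [inv_eq_one_div, le_div_iff₀ hKposR]
    have h1 : (∑ z ∈ T, P z) * (K : ℝ) = ∑ z ∈ T, (K : ℝ) * P z := by
      rw [Finset.sum_mul]; exact Finset.sum_congr rfl fun z _ => by ring
    rw [h1]
    have h2 : ∑ z ∈ T, (K : ℝ) * P z ≤ ∑ z ∈ T, ∑ x ∈ ball z, P x := by
      apply Finset.sum_le_sum
      intro z hz
      exact (Finset.mem_filter.1 hz).2
    have hpd : (↑T : Set (Fin n → Bool)).PairwiseDisjoint ball := by
      intro z hz z' hz' hne
      exact hdisj z (Finset.filter_subset _ _ (Finset.mem_coe.1 hz))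
        z' (Finset.filter_subset _ _ (Finset.mem_coe.1 hz')) hne
    have h3 : ∑ z ∈ T, ∑ x ∈ ball z, P x = ∑ x ∈ T.biUnion ball, P x :=
      (Finset.sum_biUnion hpd).symm
    have h4 : ∑ x ∈ T.biUnion ball, P x ≤ ∑ x : Fin n → Bool, P x := by
      apply Finset.sum_le_sum_of_subset_of_nonneg (Finset.subset_univ _)
      intro x _ _; exact hPnn x
    have h5 : ∑ x : Fin n → Bool, P x = 1 := by
      rw [show (fun x => P x) = fun x => ∏ i, if x i then q i else 1 - q i from
        funext hP]
      exact Ptotal q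
    calc ∑ z ∈ T, (K : ℝ) * P z ≤ ∑ x ∈ T.biUnion ball, P x := h3 ▸ h2
      _ ≤ 1 := h5 ▸ h4
  -- at most one bad element
  have hbad : ∀ z ∈ S, z ∉ T → ∀ z' ∈ S, z' ∉ T → z = z' := by
    intro z hz hzT z' hz' hz'T
    by_contra hne
    have hzpos : 0 < P z := by
      rcases (hPnn z).lt_or_eq with h | h
      · exact h
      · exfalso; apply hzT
        rw [hT, Finset.mem_filter]
        refine ⟨hz, ?_⟩
        rw [← h]
        simp only [mul_zero]
        exact Finset.sum_nonneg fun x _ => hPnn x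
    have hz'pos : 0 < P z' := by
      rcases (hPnn z').lt_or_eq with h | h
      · exact h
      · exfalso; apply hz'T
        rw [hT, Finset.mem_filter]
        refine ⟨hz', ?_⟩
        rw [← h]
        simp only [mul_zero]
        exact Finset.sum_nonneg fun x _ => hPnn x
    have := key m r q hq P hP z z' (hdist z hz z' hz' hne) hzpos hz'pos
    rcases this with h | h
    · exact hzT (by rw [hT, Finset.mem_filter]; exact ⟨hz, h⟩)
    · exact hz'T (by rw [hT, Finset.mem_filter]; exact ⟨hz', h⟩)
  obtain ⟨w, hwS, hwsup⟩ := Finset.exists_mem_eq_sup' hS P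
  rw [hwsup]
  by_cases hex : ∃ b ∈ S, b ∉ T
  · obtain ⟨b, hbS, hbT⟩ := hex
    have herase : S.erase b ⊆ T := by
      intro z hz
      have hzS : z ∈ S := Finset.mem_of_mem_erase hz
      have hzb : z ≠ b := Finset.ne_of_mem_erase hz
      by_contra hzT
      exact hzb (hbad z hzS hzT b hbS hbT)
    have h1 : ∑ z ∈ S, P z = P b + ∑ z ∈ S.erase b, P z :=
      (Finset.add_sum_erase S P hbS).symm
    have h2 : ∑ z ∈ S.erase b, P z ≤ ∑ z ∈ T, P z :=
      Finset.sum_le_sum_of_subset_of_nonneg herase (fun x _ _ => hPnn x)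
    have h3 : P b ≤ P w := by
      rw [← hwsup]; exact Finset.le_sup' P hbS
    linarith [hTsum]
  · push_neg at hex
    have hST : S ⊆ T := fun z hz => hex z hz
    have h1 : ∑ z ∈ S, P z ≤ ∑ z ∈ T, P z :=
      Finset.sum_le_sum_of_subset_of_nonneg hST (fun x _ _ => hPnn x)
    have h2 : 0 ≤ P w := hPnn w
    linarith [hTsum]
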